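/- arXiv:2112.12295 — 3 statements merged into one kernel-verified Lean document; each statement's English description precedes it below -/
import Mathlib

section
/- Suppose the cost matrix satisfies c[i][i] = α for all i and c[i][j] ≥ 2α + 1 whenever (i,j) is an inadmissible pair with i ≠ j, where α ≥ 0. If A is a feasible matrix with A[i][j] = 1 for some inadmissible pair (i,j) with i ≠ j, then A is not a global minimum of the matching ILP: the matrix B obtained by setting B[i][j]=0, B[i][i]=1, B[j][j]=1 and otherwise agreeing with A is feasible and has strictly smaller objective value. -/
lemma sum_sub_eq' {γ : Type*} [DecidableEq γ] [Fintype γ] {M : Type*} [AddCommGroup M]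
    (f g : γ → M) (s : Finset γ) (h : ∀ x, x ∉ s → f x = g x) :
    (∑ x, f x) - ∑ x, g x = ∑ x ∈ s, (f x - g x) := by
  rw [← Finset.sum_sub_distrib]
  exact (Finset.sum_subset s.subset_univ (fun x _ hx => by rw [h x hx, sub_self])).symm

theorem stmt5 (N : ℕ) (Adm : Fin N → Fin N → Prop)
    (hAdm : ∀ i j, Adm i j → i ≠ j)
    (α : ℝ) (hα : 0 ≤ α) (c : Fin N → Fin N → ℝ)
    (hdiag : ∀ i, c i i = α)
    (hbad : ∀ i j, i ≠ j → ¬ Adm i j → 2 * α + 1 ≤ c i j)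
    (A : Fin N → Fin N → Bool)
    (hfeas : ∀ k : Fin N,
      (∑ i, (A i k).toNat) + (∑ j, (A k j).toNat) - (A k k).toNat = 1)
    (i j : Fin N) (hij : i ≠ j) (hAij : A i j = true) (hbadij : ¬ Adm i j)
    (hAii : A i i = false) (hAjj : A j j = false)
    (B : Fin N → Fin N → Bool)
    (hB : ∀ a b, B a b = if (a, b) = (i, j) then false
      else if (a, b) = (i, i) then true
      else if (a, b) = (j, j) then true
      else A a b) :
    (∀ k : Fin N,
      (∑ a, (B a k).toNat) + (∑ b, (B k b).toNat) - (B k k).toNat = 1) ∧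
    (∑ a, ∑ b, ((B a b).toNat : ℝ) * c a b) <
      (∑ a, ∑ b, ((A a b).toNat : ℝ) * c a b) := by
  have hBij : B i j = false := by rw [hB]; simp
  have hBii : B i i = true := by rw [hB]; simp [Prod.ext_iff, hij]
  have hBjj : B j j = true := by rw [hB]; simp [Prod.ext_iff, hij, Ne.symm hij]
  -- column i
  have hcoli : ((∑ a, (B a i).toNat : ℕ) : ℤ) - ((∑ a, (A a i).toNat : ℕ) : ℤ) = 1 := by
    push_cast
    rw [sum_sub_eq' _ _ {i} (fun a ha => by
      simp only [Finset.mem_singleton] at ha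
      rw [hB]; simp [Prod.ext_iff, ha, hij])]
    simp [hBii, hAii]
  -- row i
  have hrowi : ((∑ b, (B i b).toNat : ℕ) : ℤ) - ((∑ b, (A i b).toNat : ℕ) : ℤ) = 0 := by
    push_cast
    rw [sum_sub_eq' _ _ {i, j} (fun b hb => by
      simp only [Finset.mem_insert, Finset.mem_singleton, not_or] at hb
      rw [hB]; simp [Prod.ext_iff, hb.1, hb.2, hij])]
    rw [Finset.sum_pair hij]
    simp [hBii, hAii, hBij, hAij]
  -- column j
  have hcolj : ((∑ a, (B a j).toNat : ℕ) : ℤ) - ((∑ a, (A a j).toNat : ℕ) : ℤ) = 0 := by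
    push_cast
    rw [sum_sub_eq' _ _ {i, j} (fun a ha => by
      simp only [Finset.mem_insert, Finset.mem_singleton, not_or] at ha
      rw [hB]; simp [Prod.ext_iff, ha.1, ha.2, hij])]
    rw [Finset.sum_pair hij]
    simp [hBjj, hAjj, hBij, hAij]
  -- row j
  have hrowj : ((∑ b, (B j b).toNat : ℕ) : ℤ) - ((∑ b, (A j b).toNat : ℕ) : ℤ) = 1 := by
    push_cast
    rw [sum_sub_eq' _ _ {j} (fun b hb => by
      simp only [Finset.mem_singleton] at hb
      rw [hB]; simp [Prod.ext_iff, hb, hij, Ne.symm hij])]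
    simp [hBjj, hAjj]
  constructor
  · intro k
    by_cases hki : k = i
    · rw [hki, hBii]; simp only [Bool.toNat_true]
      have h1 := hfeas i
      simp only [hAii, Bool.toNat_false, Nat.sub_zero] at h1
      omega
    · by_cases hkj : k = j
      · rw [hkj, hBjj]; simp only [Bool.toNat_true]
        have h1 := hfeas j
        simp only [hAjj, Bool.toNat_false, Nat.sub_zero] at h1
        omega
      · -- k ≠ i, k ≠ j : everything unchanged
        have hcol : (∑ a, (B a k).toNat) = ∑ a, (A a k).toNat := by
          refine Finset.sum_congr rfl (fun a _ => ?_)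
          rw [hB]; simp [Prod.ext_iff, hki, hkj]
        have hrow : (∑ b, (B k b).toNat) = ∑ b, (A k b).toNat := by
          refine Finset.sum_congr rfl (fun b _ => ?_)
          rw [hB]; simp [Prod.ext_iff, hki, hkj]
        have hdiagk : B k k = A k k := by
          rw [hB]; simp [Prod.ext_iff, hki, hkj]
        rw [hcol, hrow, hdiagk]
        exact hfeas k
  · have key : (∑ a, ∑ b, ((A a b).toNat : ℝ) * c a b)
        - (∑ a, ∑ b, ((B a b).toNat : ℝ) * c a b) = c i j - c i i - c j j := by
      rw [← Finset.sum_product' (f := fun a b => ((A a b).toNat : ℝ) * c a b),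
        ← Finset.sum_product' (f := fun a b => ((B a b).toNat : ℝ) * c a b),
        Finset.univ_product_univ]
      rw [sum_sub_eq' _ _ {(i, j), (i, i), (j, j)} (fun p hp => by
        simp only [Finset.mem_insert, Finset.mem_singleton, not_or] at hp
        rw [hB]; simp [hp.1, hp.2.1, hp.2.2])]
      have h1 : ((i, j) : Fin N × Fin N) ∉ ({(i, i), (j, j)} : Finset (Fin N × Fin N)) := by
        simp [Prod.ext_iff, hij, Ne.symm hij]
      have h2 : ((i, i) : Fin N × Fin N) ∉ ({(j, j)} : Finset (Fin N × Fin N)) := by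
        simp [Prod.ext_iff, hij]
      rw [Finset.sum_insert h1, Finset.sum_insert h2, Finset.sum_singleton]
      simp only [hAij, hBij, hAii, hBii, hAjj, hBjj, Bool.toNat_true, Bool.toNat_false]
      ring
    have hc : 2 * α + 1 ≤ c i j := hbad i j hij hbadij
    have hcc : c i i = α := hdiag i
    have hcc' : c j j = α := hdiag j
    linarith
end

section
/- Any feasible matrix A of the matching ILP can be transformed into a feasible matrix B whose induced matching is admissible (i.e., B[i][j] = 1 with i ≠ j only for admissible pairs), with f(B) ≤ f(A), and f(B) < f(A) whenever A contains an inadmissible match. -/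
open Finset

theorem stmt6 (N : ℕ) (Adm : Fin N → Fin N → Prop)
    (hAdm : ∀ i j, Adm i j → i ≠ j)
    (α : ℝ) (hα0 : 0 ≤ α) (hα2 : α ≤ 2) (c : Fin N → Fin N → ℝ)
    (hdiag : ∀ i, c i i = α)
    (hbad : ∀ i j, i ≠ j → ¬ Adm i j → max (2 * α + 1) 3 ≤ c i j)
    (A : Fin N → Fin N → Bool)
    (hfeas : ∀ k : Fin N,
      (∑ i, (A i k).toNat) + (∑ j, (A k j).toNat) - (A k k).toNat = 1) :
    ∃ B : Fin N → Fin N → Bool,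
      (∀ k : Fin N,
        (∑ i, (B i k).toNat) + (∑ j, (B k j).toNat) - (B k k).toNat = 1) ∧
      (∀ i j, i ≠ j → B i j = true → Adm i j) ∧
      (∑ i, ∑ j, ((B i j).toNat : ℝ) * c i j) ≤
        (∑ i, ∑ j, ((A i j).toNat : ℝ) * c i j) ∧
      ((∃ i j, i ≠ j ∧ ¬ Adm i j ∧ A i j = true) →
        (∑ i, ∑ j, ((B i j).toNat : ℝ) * c i j) <
          (∑ i, ∑ j, ((A i j).toNat : ℝ) * c i j)) := by
  classical
  set bad : Fin N → Fin N → Prop := fun i j => i ≠ j ∧ ¬ Adm i j ∧ A i j = true with hbadDef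
  set inc : Fin N → Fin N → ℕ :=
    fun k t => if t = k then (A k k).toNat else (A t k).toNat + (A k t).toNat with hincDef
  have hsum1 : ∀ k, (∑ i, (A i k).toNat) + (∑ j, (A k j).toNat) = 1 + (A k k).toNat := by
    intro k
    have h := hfeas k
    have hle : (A k k).toNat ≤ ∑ i, (A i k).toNat :=
      Finset.single_le_sum (f := fun i => (A i k).toNat) (fun i _ => Nat.zero_le _) (mem_univ k)
    omega
  have hinc1 : ∀ k, ∑ t, inc k t = 1 := by
    intro k
    have hsplit : (inc k k) + ∑ t ∈ univ.erase k, inc k t = ∑ t, inc k t :=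
      Finset.add_sum_erase univ (inc k) (mem_univ k)
    have he : ∑ t ∈ univ.erase k, inc k t
        = (∑ t ∈ univ.erase k, (A t k).toNat) + (∑ t ∈ univ.erase k, (A k t).toNat) := by
      rw [← Finset.sum_add_distrib]
      refine Finset.sum_congr rfl (fun t ht => ?_)
      have htk : t ≠ k := Finset.ne_of_mem_erase ht
      simp [hincDef, htk]
    have hc : (A k k).toNat + ∑ t ∈ univ.erase k, (A t k).toNat = ∑ t, (A t k).toNat :=
      Finset.add_sum_erase univ (fun t => (A t k).toNat) (mem_univ k)
    have hr : (A k k).toNat + ∑ t ∈ univ.erase k, (A k t).toNat = ∑ t, (A k t).toNat :=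
      Finset.add_sum_erase univ (fun t => (A k t).toNat) (mem_univ k)
    have hkk : inc k k = (A k k).toNat := by simp [hincDef]
    have h1 := hsum1 k
    omega
  have pairle : ∀ (f : Fin N → ℕ) (t t' : Fin N), t ≠ t' → f t + f t' ≤ ∑ x, f x := by
    intro f t t' h
    rw [← Finset.sum_pair h]
    exact Finset.sum_le_sum_of_subset (Finset.subset_univ _)
  have incle : ∀ k t, inc k t ≤ 1 := by
    intro k t
    have := Finset.single_le_sum (f := inc k) (fun i _ => Nat.zero_le _) (mem_univ t)
    rw [hinc1 k] at this
    exact this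
  have hzero : ∀ k t t', t ≠ t' → 1 ≤ inc k t → inc k t' = 0 := by
    intro k t t' h h1
    have := pairle (inc k) t t' h
    rw [hinc1 k] at this
    omega
  have bfalse : ∀ b : Bool, b.toNat = 0 ↔ b = false := by decide
  have master : ∀ k t, t ≠ k → 1 ≤ inc k t →
      A k k = false ∧ (A t k).toNat + (A k t).toNat = 1 ∧
      ∀ t', t' ≠ t → t' ≠ k → A t' k = false ∧ A k t' = false := by
    intro k t htk h1
    have hkk0 : inc k k = 0 := hzero k t k htk h1
    have hkk' : inc k k = (A k k).toNat := by simp [hincDef]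
    have hAkk : A k k = false := (bfalse _).1 (by omega)
    have ht1 : inc k t ≤ 1 := incle k t
    have ht : inc k t = (A t k).toNat + (A k t).toNat := by simp [hincDef, htk]
    refine ⟨hAkk, by omega, fun t' ht't ht'k => ?_⟩
    have h0 : inc k t' = 0 := hzero k t t' (Ne.symm ht't) h1
    have ht' : inc k t' = (A t' k).toNat + (A k t').toNat := by simp [hincDef, ht'k]
    exact ⟨(bfalse _).1 (by omega), (bfalse _).1 (by omega)⟩
  have diagcase : ∀ k, A k k = true → ∀ t, t ≠ k → A t k = false ∧ A k t = false := by
    intro k hk t htk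
    have h1 : 1 ≤ inc k k := by simp [hincDef, hk]
    have h0 : inc k t = 0 := hzero k k t (Ne.symm htk) h1
    have ht : inc k t = (A t k).toNat + (A k t).toNat := by simp [hincDef, htk]
    exact ⟨(bfalse _).1 (by omega), (bfalse _).1 (by omega)⟩
  have nobadDiag : ∀ i, A i i = true → ¬ (∃ t, bad i t ∨ bad t i) := by
    rintro i hi ⟨t, ht | ht⟩
    · obtain ⟨hne, -, hAt⟩ := ht
      exact absurd hAt (by simp [(diagcase i hi t (Ne.symm hne)).2])
    · obtain ⟨hne, -, hAt⟩ := ht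
      exact absurd hAt (by simp [(diagcase i hi t hne).1])
  -- bad incident gives 1 ≤ inc
  have badinc1 : ∀ k t, bad k t → t ≠ k ∧ 1 ≤ inc k t := by
    rintro k t ⟨hne, -, hA⟩
    refine ⟨Ne.symm hne, ?_⟩
    have : inc k t = (A t k).toNat + (A k t).toNat := by simp [hincDef, Ne.symm hne]
    rw [this, hA]; simp
  have badinc2 : ∀ k t, bad t k → t ≠ k ∧ 1 ≤ inc k t := by
    rintro k t ⟨hne, -, hA⟩
    refine ⟨hne, ?_⟩
    have : inc k t = (A t k).toNat + (A k t).toNat := by simp [hincDef, hne]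
    rw [this, hA]; simp
  set Bm : Fin N → Fin N → Bool :=
    fun i j => if i = j then (A i i || decide (∃ t, bad i t ∨ bad t i))
      else (A i j && decide (Adm i j)) with hBm
  have hBoffFalse : ∀ k, (∀ t, t ≠ k → Bm t k = false ∧ Bm k t = false) → Bm k k = true →
      (∑ i, (Bm i k).toNat) + (∑ j, (Bm k j).toNat) - (Bm k k).toNat = 1 := by
    intro k hoff hkk
    have hcol : ∑ i, (Bm i k).toNat = 1 := by
      rw [Finset.sum_eq_single k (fun b _ hb => by simp [(hoff b hb).1])
        (fun h => absurd (mem_univ k) h)]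
      simp [hkk]
    have hrow : ∑ j, (Bm k j).toNat = 1 := by
      rw [Finset.sum_eq_single k (fun b _ hb => by simp [(hoff b hb).2])
        (fun h => absurd (mem_univ k) h)]
      simp [hkk]
    rw [hcol, hrow, hkk]
    rfl
  have hper : ∀ i j, ((A i j).toNat:ℝ) * c i j - ((Bm i j).toNat:ℝ) * c i j
      = (if bad i j then c i j else 0)
        - (if i = j then (if ∃ t, bad i t ∨ bad t i then α else 0) else 0) := by
    intro i j
    by_cases hij : i = j
    · subst hij
      have hnb : ¬ bad i i := fun h => h.1 rfl
      by_cases hA : A i i = true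
      · have hne := nobadDiag i hA
        have hB : Bm i i = true := by simp [hBm, hA]
        simp only [hB, hA]
        simp [hnb, hne]
      · rw [Bool.not_eq_true] at hA
        by_cases he : ∃ t, bad i t ∨ bad t i
        · have hB : Bm i i = true := by simp [hBm, hA, he]
          simp only [hB, hA]
          simp [hnb, he, hdiag i]
        · have hB : Bm i i = false := by simp [hBm, hA, he]
          simp only [hB, hA]
          simp [hnb, he]
    · by_cases hA : A i j = true
      case neg =>
        rw [Bool.not_eq_true] at hA
        have hb : ¬ bad i j := fun h => by rw [h.2.2] at hA; cases hA
        have hB : Bm i j = false := by simp [hBm, hij, hA]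
        simp only [hB, hA]
        simp [hb, hij]
      case pos =>
        by_cases hadm : Adm i j
        · have hb : ¬ bad i j := fun h => h.2.1 hadm
          have hB : Bm i j = true := by simp [hBm, hij, hA, hadm]
          simp only [hB, hA]
          simp [hb, hij]
        · have hb : bad i j := ⟨hij, hadm, hA⟩
          have hB : Bm i j = false := by simp [hBm, hij, hA, hadm]
          simp only [hB, hA]
          rw [if_pos hb, if_neg hij]
          norm_num
  have hcount : ∀ i, (if ∃ t, bad i t ∨ bad t i then (1:ℝ) else 0)
      = ∑ j, ((if bad i j then (1:ℝ) else 0) + (if bad j i then (1:ℝ) else 0)) := by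
    intro i
    by_cases he : ∃ t, bad i t ∨ bad t i
    · obtain ⟨t0, ht0⟩ := he
      have h1 : t0 ≠ i ∧ 1 ≤ inc i t0 := by
        rcases ht0 with h | h
        exacts [badinc1 i t0 h, badinc2 i t0 h]
      obtain ⟨hAii, hpair, hothers⟩ := master i t0 h1.1 h1.2
      rw [if_pos ⟨t0, ht0⟩]
      have hz : ∀ b ∈ (univ : Finset (Fin N)), b ≠ t0 →
          ((if bad i b then (1:ℝ) else 0) + (if bad b i then (1:ℝ) else 0)) = 0 := by
        intro b _ hb
        by_cases hbi : b = i
        · subst hbi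
          have hnb : ¬ bad b b := fun h => h.1 rfl
          rw [if_neg hnb]; norm_num
        · obtain ⟨hc1, hc2⟩ := hothers b hb hbi
          have hnb1 : ¬ bad i b := fun h => by rw [h.2.2] at hc2; cases hc2
          have hnb2 : ¬ bad b i := fun h => by rw [h.2.2] at hc1; cases hc1
          rw [if_neg hnb1, if_neg hnb2]; norm_num
      rw [Finset.sum_eq_single t0 hz (fun h => absurd (mem_univ t0) h)]
      rcases ht0 with ⟨hne, hnadm, hA⟩ | ⟨hne, hnadm, hA⟩
      · have hAt0i : A t0 i = false := by
          rw [hA] at hpair; exact (bfalse _).1 (by simpa using hpair)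
        have hnb : ¬ bad t0 i := fun h => by rw [h.2.2] at hAt0i; cases hAt0i
        rw [if_pos ⟨hne, hnadm, hA⟩, if_neg hnb]; norm_num
      · have hAit0 : A i t0 = false := by
          rw [hA] at hpair; exact (bfalse _).1 (by simpa using hpair)
        have hnb : ¬ bad i t0 := fun h => by rw [h.2.2] at hAit0; cases hAit0
        rw [if_neg hnb, if_pos ⟨hne, hnadm, hA⟩]; norm_num
    · rw [if_neg he]
      symm
      apply Finset.sum_eq_zero
      intro j _
      have h1 : ¬ bad i j := fun h => he ⟨j, Or.inl h⟩
      have h2 : ¬ bad j i := fun h => he ⟨j, Or.inr h⟩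
      rw [if_neg h1, if_neg h2]; norm_num
  have hnn : ∀ i j, (0:ℝ) ≤ (if bad i j then c i j - 2*α else 0) := by
    intro i j
    split_ifs with h
    · linarith [le_trans (le_max_left (2*α+1) 3) (hbad i j h.1 h.2.1)]
    · exact le_rfl
  have hdiff : (∑ i, ∑ j, ((A i j).toNat:ℝ) * c i j) - (∑ i, ∑ j, ((Bm i j).toNat:ℝ) * c i j)
      = ∑ i, ∑ j, (if bad i j then c i j - 2*α else 0) := by
    have e1 : (∑ i, ∑ j, ((A i j).toNat:ℝ) * c i j) - (∑ i, ∑ j, ((Bm i j).toNat:ℝ) * c i j)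
        = ∑ i, ∑ j, (((A i j).toNat:ℝ) * c i j - ((Bm i j).toNat:ℝ) * c i j) := by
      rw [← Finset.sum_sub_distrib]
      exact Finset.sum_congr rfl (fun i _ => (Finset.sum_sub_distrib _ _).symm)
    have e2 : ∀ i, ∑ j, (((A i j).toNat:ℝ) * c i j - ((Bm i j).toNat:ℝ) * c i j)
        = (∑ j, (if bad i j then c i j else 0))
          - (if ∃ t, bad i t ∨ bad t i then α else 0) := by
      intro i
      calc ∑ j, (((A i j).toNat:ℝ) * c i j - ((Bm i j).toNat:ℝ) * c i j)
          = ∑ j, ((if bad i j then c i j else 0)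
              - (if i = j then (if ∃ t, bad i t ∨ bad t i then α else 0) else 0)) :=
            Finset.sum_congr rfl (fun j _ => hper i j)
        _ = (∑ j, (if bad i j then c i j else 0))
              - ∑ j, (if i = j then (if ∃ t, bad i t ∨ bad t i then α else 0) else 0) :=
            Finset.sum_sub_distrib _ _
        _ = _ := by
            rw [Finset.sum_ite_eq univ i
              (fun _ => if ∃ t, bad i t ∨ bad t i then α else 0)]
            simp
    have e3 : ∑ i, (if ∃ t, bad i t ∨ bad t i then α else 0)
        = 2 * α * ∑ i, ∑ j, (if bad i j then (1:ℝ) else 0) := by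
      have h4 : ∀ i, (if ∃ t, bad i t ∨ bad t i then α else 0)
          = α * (if ∃ t, bad i t ∨ bad t i then (1:ℝ) else 0) := by
        intro i; split_ifs <;> ring
      rw [Finset.sum_congr rfl (fun i _ => h4 i), ← Finset.mul_sum,
        Finset.sum_congr rfl (fun i _ => hcount i)]
      have h5 : ∑ i, ∑ j, ((if bad i j then (1:ℝ) else 0) + (if bad j i then (1:ℝ) else 0))
          = (∑ i, ∑ j, (if bad i j then (1:ℝ) else 0))
            + ∑ i, ∑ j, (if bad j i then (1:ℝ) else 0) := by
        rw [← Finset.sum_add_distrib]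
        exact Finset.sum_congr rfl (fun i _ => Finset.sum_add_distrib)
      have h6 : ∑ i, ∑ j, (if bad j i then (1:ℝ) else 0)
          = ∑ i, ∑ j, (if bad i j then (1:ℝ) else 0) := Finset.sum_comm
      rw [h5, h6]; ring
    have e4 : ∑ i, ∑ j, (if bad i j then c i j - 2*α else 0)
        = (∑ i, ∑ j, (if bad i j then c i j else 0))
          - 2 * α * ∑ i, ∑ j, (if bad i j then (1:ℝ) else 0) := by
      rw [Finset.mul_sum, ← Finset.sum_sub_distrib]
      refine Finset.sum_congr rfl (fun i _ => ?_)
      rw [Finset.mul_sum, ← Finset.sum_sub_distrib]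
      refine Finset.sum_congr rfl (fun j _ => ?_)
      split_ifs <;> ring
    rw [e1, Finset.sum_congr rfl (fun i _ => e2 i), Finset.sum_sub_distrib, e3, e4]
  refine ⟨Bm, ?_, ?_, ?_, ?_⟩
  · -- feasibility
    intro k
    by_cases hk : A k k = true
    · have hBkk : Bm k k = true := by simp [hBm, hk]
      refine hBoffFalse k (fun t htk => ?_) hBkk
      obtain ⟨h1, h2⟩ := diagcase k hk t htk
      constructor
      · simp [hBm, htk, h1]
      · simp [hBm, Ne.symm htk, h2]
    · rw [Bool.not_eq_true] at hk
      by_cases he : ∃ t, bad k t ∨ bad t k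
      · have hBkk : Bm k k = true := by simp [hBm, hk, he]
        obtain ⟨t0, ht0⟩ := he
        have hinc1' : t0 ≠ k ∧ 1 ≤ inc k t0 := by
          rcases ht0 with h | h
          · exact badinc1 k t0 h
          · exact badinc2 k t0 h
        obtain ⟨-, hpair, hothers⟩ := master k t0 hinc1'.1 hinc1'.2
        refine hBoffFalse k (fun t htk => ?_) hBkk
        by_cases htt0 : t = t0
        · subst htt0
          rcases ht0 with ⟨hne, hnadm, hA⟩ | ⟨hne, hnadm, hA⟩
          · -- bad k t : A k t = true, so A t k = false
            have hAtk : A t k = false := by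
              rw [hA] at hpair; exact (bfalse _).1 (by simpa using hpair)
            constructor
            · simp [hBm, htk, hAtk]
            · simp [hBm, hne, hnadm]
          · -- bad t k : A t k = true, so A k t = false
            have hAkt : A k t = false := by
              rw [hA] at hpair; exact (bfalse _).1 (by simpa using hpair)
            constructor
            · simp [hBm, htk, hnadm]
            · simp [hBm, Ne.symm htk, hAkt]
        · obtain ⟨hc1, hc2⟩ := hothers t htt0 htk
          exact ⟨by simp [hBm, htk, hc1], by simp [hBm, Ne.symm htk, hc2]⟩
      · have hBkk : Bm k k = false := by simp [hBm, hk, he]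
        have hcol : ∀ i, Bm i k = A i k := by
          intro i
          by_cases hik : i = k
          · subst hik; rw [hBkk, hk]
          · cases hA : A i k with
            | false => simp [hBm, hik, hA]
            | true =>
              have hadm : Adm i k := by
                by_contra hn
                exact he ⟨i, Or.inr ⟨hik, hn, hA⟩⟩
              simp [hBm, hik, hA, hadm]
        have hrow : ∀ j, Bm k j = A k j := by
          intro j
          by_cases hjk : k = j
          · subst hjk; rw [hBkk, hk]
          · cases hA : A k j with
            | false => simp [hBm, hjk, hA]
            | true =>
              have hadm : Adm k j := by
                by_contra hn
                exact he ⟨j, Or.inl ⟨hjk, hn, hA⟩⟩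
              simp [hBm, hjk, hA, hadm]
        simp only [hcol, hrow]
        exact hfeas k
  · -- admissibility
    intro i j hij hB
    simp [hBm, hij] at hB
    exact hB.2
  · -- cost nonincrease
    have h0 : (0:ℝ) ≤ ∑ i, ∑ j, (if bad i j then c i j - 2*α else 0) :=
      Finset.sum_nonneg (fun i _ => Finset.sum_nonneg (fun j _ => hnn i j))
    linarith [hdiff]
  · -- strict decrease
    rintro ⟨i0, j0, h1, h2, h3⟩
    have hb : bad i0 j0 := ⟨h1, h2, h3⟩
    have hterm : (1:ℝ) ≤ (if bad i0 j0 then c i0 j0 - 2*α else 0) := by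
      rw [if_pos hb]
      linarith [le_trans (le_max_left (2*α+1) 3) (hbad i0 j0 h1 h2)]
    have hin : (if bad i0 j0 then c i0 j0 - 2*α else 0)
        ≤ ∑ j, (if bad i0 j then c i0 j - 2*α else 0) :=
      Finset.single_le_sum (f := fun j => if bad i0 j then c i0 j - 2*α else 0)
        (fun j _ => hnn i0 j) (mem_univ j0)
    have hout : (∑ j, (if bad i0 j then c i0 j - 2*α else 0))
        ≤ ∑ i, ∑ j, (if bad i j then c i j - 2*α else 0) :=
      Finset.single_le_sum (f := fun i => ∑ j, (if bad i j then c i j - 2*α else 0))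
        (fun i _ => Finset.sum_nonneg (fun j _ => hnn i j)) (mem_univ i0)
    linarith [hdiff]
end

section
/- Let l = min over i ≠ j of c[i][j] and assume c[i][j] > 0 for all i ≠ j and c[i][i] = α for all i with 2α < l. Then the unique global minimum of the matching ILP is the identity matrix: A[i][i] = 1 for all i and A[i][j] = 0 for i ≠ j. -/
theorem stmt7 (N : ℕ) (α : ℝ) (c : Fin N → Fin N → ℝ)
    (hpos : ∀ i j, i ≠ j → 0 < c i j)
    (hdiag : ∀ i, c i i = α)
    (hmin : ∀ i j, i ≠ j → 2 * α < c i j) :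
    (∀ k : Fin N,
      (∑ i, ((fun i j : Fin N => decide (i = j)) i k).toNat) +
        (∑ j, ((fun i j : Fin N => decide (i = j)) k j).toNat) -
        ((fun i j : Fin N => decide (i = j)) k k).toNat = 1) ∧
    ∀ B : Fin N → Fin N → Bool,
      (∀ k : Fin N,
        (∑ i, (B i k).toNat) + (∑ j, (B k j).toNat) - (B k k).toNat = 1) →
      B ≠ (fun i j : Fin N => decide (i = j)) →
      (∑ i, ∑ j, (((fun i j : Fin N => decide (i = j)) i j).toNat : ℝ) * c i j) <
        (∑ i, ∑ j, ((B i j).toNat : ℝ) * c i j) := by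
  constructor
  · intro k
    have h1 : (∑ i, ((fun i j : Fin N => decide (i = j)) i k).toNat) = 1 := by
      simp [Bool.toNat, Bool.cond_decide, Finset.sum_ite_eq]
    have h2 : (∑ j, ((fun i j : Fin N => decide (i = j)) k j).toNat) = 1 := by
      simp [Bool.toNat, Bool.cond_decide, Finset.sum_ite_eq']
    simp [h1, h2]
  · intro B hB hne
    -- LHS equals N * α
    have hLHS : (∑ i, ∑ j, (((fun i j : Fin N => decide (i = j)) i j).toNat : ℝ) * c i j)
        = N * α := by
      have : ∀ i : Fin N, (∑ j, (((decide (i = j)):Bool).toNat : ℝ) * c i j) = α := by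
        intro i
        rw [Finset.sum_eq_single i]
        · simp [hdiag]
        · intro b _ hb
          simp [Ne.symm hb]
        · simp
      simp only [this, Finset.sum_const, Finset.card_univ, Fintype.card_fin, nsmul_eq_mul]
    -- real-valued constraint
    have hcon : ∀ k : Fin N, (∑ i, ((B i k).toNat : ℝ)) + (∑ j, ((B k j).toNat : ℝ))
        = 1 + ((B k k).toNat : ℝ) := by
      intro k
      have h := hB k
      have hle : (B k k).toNat ≤ ∑ i, (B i k).toNat :=
        Finset.single_le_sum (f := fun i => (B i k).toNat) (fun i _ => Nat.zero_le _)
          (Finset.mem_univ k)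
      have h2 : (∑ i, (B i k).toNat) + (∑ j, (B k j).toNat) = 1 + (B k k).toNat := by omega
      exact_mod_cast h2
    -- sum of constraints
    set S : ℝ := ∑ i, ∑ j, ((B i j).toNat : ℝ) with hS
    set D : ℝ := ∑ k, ((B k k).toNat : ℝ) with hD
    have hsum : 2 * S = N + D := by
      have := Finset.sum_congr rfl (fun k (_ : k ∈ Finset.univ) => hcon k)
      rw [Finset.sum_add_distrib, Finset.sum_add_distrib, Finset.sum_comm] at this
      simp only [Finset.sum_const, Finset.card_univ, Fintype.card_fin, nsmul_eq_mul,
        mul_one] at this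
      rw [← hS, ← hD] at this
      linarith
    -- decomposition of objective
    have hdecomp : (∑ i, ∑ j, ((B i j).toNat : ℝ) * c i j)
        = (∑ i, ∑ j, (if i = j then 0 else ((B i j).toNat : ℝ) * (c i j - 2 * α)))
          + 2 * α * S - α * D := by
      have : ∀ i j : Fin N, ((B i j).toNat : ℝ) * c i j
          = (if i = j then 0 else ((B i j).toNat : ℝ) * (c i j - 2 * α))
            + 2 * α * ((B i j).toNat : ℝ)
            - (if i = j then α * ((B i j).toNat : ℝ) else 0) := by
        intro i j
        by_cases h : i = j
        · subst h; simp [hdiag i]; ring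
        · simp [h]; ring
      simp only [this, Finset.sum_sub_distrib, Finset.sum_add_distrib, ← Finset.mul_sum]
      rw [← hS]
      have hDeq : (∑ i, ∑ j, (if i = j then α * ((B i j).toNat : ℝ) else 0)) = α * D := by
        rw [hD, Finset.mul_sum]
        refine Finset.sum_congr rfl (fun i _ => ?_)
        simp [Finset.sum_ite_eq]
      rw [hDeq]
    -- existence of an off-diagonal one
    have hwit : ∃ i j : Fin N, i ≠ j ∧ B i j = true := by
      by_contra hcontra
      push_neg at hcontra
      apply hne
      funext i j
      by_cases h : i = j
      · subst h
        have hcol : ∀ k : Fin N, (∑ i, (B i k).toNat) = (B k k).toNat := by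
          intro k
          rw [Finset.sum_eq_single k]
          · intro b _ hb
            simp [hcontra b k hb]
          · simp
        have hrow : ∀ k : Fin N, (∑ j, (B k j).toNat) = (B k k).toNat := by
          intro k
          rw [Finset.sum_eq_single k]
          · intro b _ hb
            simp [hcontra k b (Ne.symm hb)]
          · simp
        have h := hB i
        rw [hcol i, hrow i] at h
        have : (B i i).toNat = 1 := by omega
        simp only [decide_eq_true_eq]
        cases hb : B i i
        · rw [hb] at this; simp at this
        · simp
      · have := hcontra i j h
        simp [this, h]
    obtain ⟨i0, j0, hij, hBij⟩ := hwit
    -- the slack sum is positive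
    have hpos' : 0 < ∑ i, ∑ j, (if i = j then 0 else ((B i j).toNat : ℝ) * (c i j - 2 * α)) := by
      have hnn : ∀ i j : Fin N,
          0 ≤ (if i = j then 0 else ((B i j).toNat : ℝ) * (c i j - 2 * α)) := by
        intro i j
        by_cases h : i = j
        · simp [h]
        · simp only [h, if_false]
          have := hmin i j h
          have h2 : (0:ℝ) ≤ c i j - 2 * α := by linarith
          exact mul_nonneg (by positivity) h2
      refine Finset.sum_pos' (fun i _ => Finset.sum_nonneg (fun j _ => hnn i j)) ⟨i0,
        Finset.mem_univ i0, ?_⟩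
      refine Finset.sum_pos' (fun j _ => hnn i0 j) ⟨j0, Finset.mem_univ j0, ?_⟩
      simp only [hij, if_false, hBij]
      have := hmin i0 j0 hij
      simp
      linarith
    rw [hLHS, hdecomp]
    have : 2 * α * S - α * D = N * α := by
      have : α * (2 * S) = α * (N + D) := by rw [hsum]
      nlinarith [this]
    linarith
end
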